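/- Let H = (V, E) be a hypergraph, k a positive integer, and e, e' ∈ E distinct edges. If γ_H(e) < k (e is k-weak) and e' is k-strong (γ_H(e') ≥ k), then the corresponding edge f of e in the contracted hypergraph H/e' satisfies γ_{H/e'}(f) = γ_H(e); that is, contracting a k-strong edge does not change the strength of a k-weak edge. -/

import Mathlib

/- A hypergraph on a finite vertex type `V` is given by a multiset `E` of edges,
each edge a `Finset V` (with at least 2 vertices, stated as a hypothesis). -/

variable {V : Type*} [Fintype V] [DecidableEq V]

/-- `δ_H(A)`: the (multiset of) edges of `E` crossing the cut `A`. -/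
def cutEdges (E : Multiset (Finset V)) (A : Finset V) : Multiset (Finset V) :=
  E.filter (fun e => (e ∩ A).Nonempty ∧ (e \ A).Nonempty)

/-- Edge multiset of the subhypergraph `H[U]` induced on `U`. -/
def induced (E : Multiset (Finset V)) (U : Finset V) : Multiset (Finset V) :=
  E.filter (fun e => e ⊆ U)

/-- Edge-connectivity `λ(H[U])`: the minimum number of edges of `H[U]` crossing a
nonempty proper subset `A ⊊ U`. -/
noncomputable def lam (E : Multiset (Finset V)) (U : Finset V) : ℕ :=
  sInf {k : ℕ | ∃ A : Finset V, A ⊆ U ∧ A.Nonempty ∧ A ≠ U ∧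
    k = Multiset.card (cutEdges (induced E U) A)}

/-- Strength `γ_H(e)`: the maximum of `λ(H[U])` over all `U` with `e ⊆ U ⊆ V`. -/
noncomputable def strength (E : Multiset (Finset V)) (e : Finset V) : ℕ :=
  (Finset.univ.powerset.filter (fun U => e ⊆ U)).sup (lam E)

/-- The graph on `V` joining two distinct vertices that lie in a common edge of `E`;
its connectivity notions are those of the hypergraph. -/
def toGraph (E : Multiset (Finset V)) : SimpleGraph V where
  Adj u v := u ≠ v ∧ ∃ e ∈ E, u ∈ e ∧ v ∈ e
  symm := ⟨by rintro u v ⟨h, e, he, hu, hv⟩; exact ⟨h.symm, e, he, hv, hu⟩⟩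
  loopless := ⟨by rintro v ⟨h, -⟩; exact h rfl⟩

/-- `κ(H)`: the number of connected components of the hypergraph. -/
noncomputable def kappa (E : Multiset (Finset V)) : ℕ :=
  Nat.card (toGraph E).ConnectedComponent

/-- The vertex map contracting the edge `e'` to its representative vertex `v0 ∈ e'`. -/
def contractMap (e' : Finset V) (v0 : V) : V → V := fun u => if u ∈ e' then v0 else u

/-- The hypergraph `H/e'` obtained by contracting the edge `e'` (to the representative
vertex `v0 ∈ e'`): edges contained in `e'` are removed, all other edges are replaced by
their image under the contraction. -/
def contract (E : Multiset (Finset V)) (e' : Finset V) (v0 : V) : Multiset (Finset V) :=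
  (E.filter (fun f => ¬ f ⊆ e')).map (fun f => f.image (contractMap e' v0))

/-- The degree of a vertex: the number of edges (with multiplicity) containing it. -/
def degree (E : Multiset (Finset V)) (v : V) : ℕ :=
  Multiset.card (E.filter (fun e => v ∈ e))


lemma cut_eq (E : Multiset (Finset V)) (U A : Finset V) :
    cutEdges (induced E U) A =
      Multiset.filter (fun g => ((g ∩ A).Nonempty ∧ (g \ A).Nonempty) ∧ g ⊆ U) E := by
  simp only [cutEdges, induced, Multiset.filter_filter]

lemma cut_contract_eq (E : Multiset (Finset V)) (e' : Finset V) (v0 : V) (U' A' : Finset V) :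
    cutEdges (induced (contract E e' v0) U') A' =
      Multiset.map (fun g => g.image (contractMap e' v0))
        (Multiset.filter (fun g =>
          (((g.image (contractMap e' v0) ∩ A').Nonempty ∧
            (g.image (contractMap e' v0) \ A').Nonempty) ∧
            g.image (contractMap e' v0) ⊆ U') ∧ ¬ g ⊆ e') E) := by
  simp only [cutEdges, induced, contract, Multiset.filter_filter, Multiset.filter_map,
    Function.comp, Multiset.filter_filter]
  congr 1
  apply Multiset.filter_congr
  intro g _
  tauto

lemma card_filter_mono {p q : Finset V → Prop} [DecidablePred p] [DecidablePred q]
    (E : Multiset (Finset V)) (h : ∀ g, p g → q g) :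
    Multiset.card (Multiset.filter p E) ≤ Multiset.card (Multiset.filter q E) :=
  Multiset.card_le_card (Multiset.monotone_filter_right E h)

lemma lam_le {E : Multiset (Finset V)} {U A : Finset V} (h1 : A ⊆ U) (h2 : A.Nonempty)
    (h3 : A ≠ U) : lam E U ≤ Multiset.card (cutEdges (induced E U) A) :=
  Nat.sInf_le ⟨A, h1, h2, h3, rfl⟩

lemma exists_lam_min {E : Multiset (Finset V)} {U : Finset V}
    (h : ∃ A : Finset V, A ⊆ U ∧ A.Nonempty ∧ A ≠ U) :
    ∃ A : Finset V, A ⊆ U ∧ A.Nonempty ∧ A ≠ U ∧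
      lam E U = Multiset.card (cutEdges (induced E U) A) := by
  obtain ⟨A₀, h1, h2, h3⟩ := h
  have hne : {k : ℕ | ∃ A : Finset V, A ⊆ U ∧ A.Nonempty ∧ A ≠ U ∧
      k = Multiset.card (cutEdges (induced E U) A)}.Nonempty :=
    ⟨_, A₀, h1, h2, h3, rfl⟩
  obtain ⟨A, hA1, hA2, hA3, hA4⟩ := Nat.sInf_mem hne
  exact ⟨A, hA1, hA2, hA3, hA4⟩

lemma le_lam {E : Multiset (Finset V)} {U : Finset V} {c : ℕ}
    (hne : ∃ A : Finset V, A ⊆ U ∧ A.Nonempty ∧ A ≠ U)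
    (h : ∀ A : Finset V, A ⊆ U → A.Nonempty → A ≠ U →
      c ≤ Multiset.card (cutEdges (induced E U) A)) : c ≤ lam E U := by
  obtain ⟨A, h1, h2, h3, h4⟩ := exists_lam_min (E := E) hne
  rw [h4]; exact h A h1 h2 h3

lemma exists_valid_A {e U : Finset V} (he2 : 2 ≤ e.card) (heU : e ⊆ U) :
    ∃ A : Finset V, A ⊆ U ∧ A.Nonempty ∧ A ≠ U := by
  obtain ⟨a, ha, b, hb, hab⟩ := Finset.one_lt_card.mp he2
  refine ⟨{a}, by simpa using heU ha, ⟨a, Finset.mem_singleton_self a⟩, fun h => hab ?_⟩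
  have : b ∈ ({a} : Finset V) := h ▸ heU hb
  simpa [eq_comm] using this

lemma lam_le_strength {E : Multiset (Finset V)} {e U : Finset V} (h : e ⊆ U) :
    lam E U ≤ strength E e :=
  Finset.le_sup (by simp [h])

lemma exists_strength_max (E : Multiset (Finset V)) (e : Finset V) :
    ∃ U : Finset V, e ⊆ U ∧ lam E U = strength E e := by
  obtain ⟨U, hU, h⟩ := Finset.exists_mem_eq_sup
    (Finset.univ.powerset.filter (fun U => e ⊆ U)) ⟨Finset.univ, by simp⟩ (lam E)
  exact ⟨U, (Finset.mem_filter.mp hU).2, h.symm⟩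

lemma cut_compl {E : Multiset (Finset V)} {U A : Finset V} (hA : A ⊆ U) :
    Multiset.card (cutEdges (induced E U) (U \ A)) =
      Multiset.card (cutEdges (induced E U) A) := by
  rw [cut_eq, cut_eq]
  congr 1
  apply Multiset.filter_congr
  intro g _
  constructor
  · rintro ⟨⟨h1, h2⟩, hgU⟩
    refine ⟨⟨?_, ?_⟩, hgU⟩
    · obtain ⟨x, hx⟩ := h2
      simp only [Finset.mem_sdiff, Finset.mem_inter, Finset.mem_sdiff, not_and, not_not] at hx
      exact ⟨x, Finset.mem_inter.mpr ⟨hx.1, hx.2 (hgU hx.1)⟩⟩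
    · obtain ⟨x, hx⟩ := h1
      simp only [Finset.mem_inter, Finset.mem_sdiff] at hx
      exact ⟨x, Finset.mem_sdiff.mpr ⟨hx.1, hx.2.2⟩⟩
  · rintro ⟨⟨h1, h2⟩, hgU⟩
    refine ⟨⟨?_, ?_⟩, hgU⟩
    · obtain ⟨x, hx⟩ := h2
      simp only [Finset.mem_sdiff] at hx
      exact ⟨x, Finset.mem_inter.mpr ⟨hx.1, Finset.mem_sdiff.mpr ⟨hgU hx.1, hx.2⟩⟩⟩
    · obtain ⟨x, hx⟩ := h1
      simp only [Finset.mem_inter] at hx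
      refine ⟨x, Finset.mem_sdiff.mpr ⟨hx.1, ?_⟩⟩
      simp only [Finset.mem_sdiff, not_and, not_not]
      exact fun _ => hx.2

lemma lam_le_cut {E : Multiset (Finset V)} {W U A : Finset V} (hWU : W ⊆ U)
    (h1 : (A ∩ W).Nonempty) (h2 : (W \ A).Nonempty) :
    lam E W ≤ Multiset.card (cutEdges (induced E U) A) := by
  have hneW : A ∩ W ≠ W := by
    intro h
    obtain ⟨x, hx⟩ := h2
    rw [Finset.mem_sdiff] at hx
    have : x ∈ A ∩ W := by rw [h]; exact hx.1
    exact hx.2 (Finset.mem_inter.mp this).1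
  refine (lam_le Finset.inter_subset_right h1 hneW).trans ?_
  rw [cut_eq, cut_eq]
  apply card_filter_mono
  rintro g ⟨⟨hc1, hc2⟩, hgW⟩
  refine ⟨⟨?_, ?_⟩, hgW.trans hWU⟩
  · obtain ⟨x, hx⟩ := hc1
    simp only [Finset.mem_inter] at hx
    exact ⟨x, Finset.mem_inter.mpr ⟨hx.1, hx.2.1⟩⟩
  · obtain ⟨x, hx⟩ := hc2
    simp only [Finset.mem_sdiff, Finset.mem_inter, not_and] at hx
    exact ⟨x, Finset.mem_sdiff.mpr ⟨hx.1, fun hA => hx.2 hA (hgW hx.1)⟩⟩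

lemma image_contractMap_of_disjoint {e' : Finset V} {v0 : V} {g : Finset V}
    (h : ∀ x ∈ g, x ∉ e') : g.image (contractMap e' v0) = g := by
  rw [Finset.image_congr (g := id), Finset.image_id]
  intro x hx
  simp only [contractMap, id_eq, if_neg (h x hx)]

/-- contracting a `k`-strong edge `e'` does not change the strength of a
`k`-weak edge `e`; here `f = e.image (contractMap e' v0)` is the edge of `H/e'`
corresponding to `e`. -/
theorem strength_contract_strong_eq (E : Multiset (Finset V))
    (hE : ∀ e ∈ E, 2 ≤ e.card) (k : ℕ) (hk : 0 < k)
    (e e' : Finset V) (he : e ∈ E) (he' : e' ∈ E) (hne : e ≠ e')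
    (v0 : V) (hv0 : v0 ∈ e')
    (hweak : strength E e < k) (hstrong : k ≤ strength E e') :
    strength (contract E e' v0) (e.image (contractMap e' v0)) = strength E e := by
  classical
  have he2 : 2 ≤ e.card := hE e he
  have hφid : ∀ u, u ∉ e' → contractMap e' v0 u = u := fun u hu => by
    simp [contractMap, hu]
  have hφv0 : ∀ u, u ∈ e' → contractMap e' v0 u = v0 := fun u hu => by
    simp [contractMap, hu]
  have hese : ¬ e ⊆ e' := by
    intro hsub
    have hmono : strength E e' ≤ strength E e := by
      apply Finset.sup_le
      intro U hU
      exact lam_le_strength (hsub.trans (Finset.mem_filter.mp hU).2)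
    omega
  obtain ⟨a₀, ha₀e, ha₀e'⟩ := Finset.not_subset.mp hese
  have hf₀2 : 2 ≤ (e.image (contractMap e' v0)).card := by
    obtain ⟨x, hx, y, hy, hxy⟩ := Finset.one_lt_card.mp he2
    have hb : ∃ b ∈ e, b ≠ a₀ := by
      rcases eq_or_ne x a₀ with h | h
      · exact ⟨y, hy, by rw [← h]; exact hxy.symm⟩
      · exact ⟨x, hx, h⟩
    obtain ⟨b, hb, hba⟩ := hb
    refine Finset.one_lt_card.mpr ⟨a₀, ?_, contractMap e' v0 b, Finset.mem_image_of_mem _ hb, ?_⟩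
    · rw [← hφid a₀ ha₀e']; exact Finset.mem_image_of_mem _ ha₀e
    · by_cases hbe' : b ∈ e'
      · rw [hφv0 b hbe']
        intro h
        exact ha₀e' (h ▸ hv0)
      · rw [hφid b hbe']
        exact hba.symm
  obtain ⟨W, he'W, hWeq⟩ := exists_strength_max E e'
  have hkW : k ≤ lam E W := by rw [hWeq]; exact hstrong
  apply le_antisymm
  · -- strength of contracted ≤ strength E e
    apply Finset.sup_le
    intro U' hU'mem
    have hfU' : e.image (contractMap e' v0) ⊆ U' := (Finset.mem_filter.mp hU'mem).2
    by_cases hv : v0 ∈ U'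
    · -- v0 ∈ U'
      set U : Finset V := U' ∪ e' ∪ W with hUdef
      have hU'U : U' ⊆ U := fun x hx => Finset.mem_union_left _ (Finset.mem_union_left _ hx)
      have he'U : e' ⊆ U := fun x hx => Finset.mem_union_left _ (Finset.mem_union_right _ hx)
      have hWU : W ⊆ U := fun x hx => Finset.mem_union_right _ hx
      have heU : e ⊆ U := by
        intro u hu
        by_cases hue' : u ∈ e'
        · exact he'U hue'
        · have h1 : contractMap e' v0 u ∈ e.image (contractMap e' v0) :=
            Finset.mem_image_of_mem _ hu
          rw [hφid u hue'] at h1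
          exact hU'U (hfU' h1)
      obtain ⟨A₁, hA₁U, hA₁ne, hA₁neU, hA₁card⟩ :=
        exists_lam_min (E := E) (exists_valid_A he2 heU)
      have hA₁le : Multiset.card (cutEdges (induced E U) A₁) ≤ strength E e := by
        rw [← hA₁card]; exact lam_le_strength heU
      have hsplitfree : ∀ B : Finset V, B ⊆ U →
          Multiset.card (cutEdges (induced E U) B) ≤ strength E e →
          (∀ x ∈ e', x ∉ B) ∨ e' ⊆ B := by
        intro B hBU hBcard
        by_cases hint : (e' ∩ B).Nonempty
        · right
          by_contra hsub
          obtain ⟨y, hy, hyB⟩ := Finset.not_subset.mp hsub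
          obtain ⟨x, hx⟩ := hint
          rw [Finset.mem_inter] at hx
          have h1 : (B ∩ W).Nonempty := ⟨x, Finset.mem_inter.mpr ⟨hx.2, he'W hx.1⟩⟩
          have h2 : (W \ B).Nonempty := ⟨y, Finset.mem_sdiff.mpr ⟨he'W hy, hyB⟩⟩
          have := (hkW.trans (lam_le_cut hWU h1 h2)).trans hBcard
          omega
        · left
          intro x hx hxB
          exact hint ⟨x, Finset.mem_inter.mpr ⟨hx, hxB⟩⟩
      have hex : ∃ A : Finset V, A ⊆ U ∧ A.Nonempty ∧ A ≠ U ∧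
          Multiset.card (cutEdges (induced E U) A) ≤ strength E e ∧ ∀ x ∈ e', x ∉ A := by
        rcases hsplitfree A₁ hA₁U hA₁le with h | h
        · exact ⟨A₁, hA₁U, hA₁ne, hA₁neU, hA₁le, h⟩
        · refine ⟨U \ A₁, Finset.sdiff_subset, ?_, ?_, ?_, ?_⟩
          · rw [Finset.sdiff_nonempty]
            intro hUA
            exact hA₁neU (Finset.Subset.antisymm hA₁U hUA)
          · intro hEq
            obtain ⟨a, ha⟩ := hA₁ne
            have : a ∈ U \ A₁ := by rw [hEq]; exact hA₁U ha
            exact (Finset.mem_sdiff.mp this).2 ha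
          · rw [cut_compl hA₁U]; exact hA₁le
          · intro x hx hxB
            exact (Finset.mem_sdiff.mp hxB).2 (h hx)
      obtain ⟨A, hAU, hAne, hAneU, hAcard, hAe'⟩ := hex
      have hv0A : v0 ∉ A := hAe' v0 hv0
      have hA'ne : (A ∩ U').Nonempty := by
        by_contra hcon
        have hAW : A ⊆ W := by
          intro x hx
          have hxU := hAU hx
          have hxU' : x ∉ U' := fun h => hcon ⟨x, Finset.mem_inter.mpr ⟨hx, h⟩⟩
          have hxe' : x ∉ e' := fun h => hAe' x h hx
          simp only [hUdef, Finset.mem_union] at hxU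
          tauto
        have h1 : (A ∩ W).Nonempty := by
          obtain ⟨a, ha⟩ := hAne
          exact ⟨a, Finset.mem_inter.mpr ⟨ha, hAW ha⟩⟩
        have h2 : (W \ A).Nonempty := ⟨v0, Finset.mem_sdiff.mpr ⟨he'W hv0, hv0A⟩⟩
        have := (hkW.trans (lam_le_cut hWU h1 h2)).trans hAcard
        omega
      have hA'neU' : A ∩ U' ≠ U' := by
        intro hEq
        have : v0 ∈ A ∩ U' := by rw [hEq]; exact hv
        exact hv0A (Finset.mem_inter.mp this).1
      refine (lam_le (E := contract E e' v0) Finset.inter_subset_right hA'ne hA'neU').trans ?_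
      refine le_trans ?_ hAcard
      rw [cut_contract_eq, Multiset.card_map, cut_eq]
      apply card_filter_mono
      rintro g ⟨⟨⟨hc1, hc2⟩, hgU'⟩, hge'⟩
      have hgU : g ⊆ U := by
        intro u hu
        by_cases hue' : u ∈ e'
        · exact he'U hue'
        · have : contractMap e' v0 u ∈ g.image (contractMap e' v0) :=
            Finset.mem_image_of_mem _ hu
          rw [hφid u hue'] at this
          exact hU'U (hgU' this)
      refine ⟨⟨?_, ?_⟩, hgU⟩
      · obtain ⟨x, hx⟩ := hc1
        rw [Finset.mem_inter] at hx
        have hxA : x ∈ A := (Finset.mem_inter.mp hx.2).1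
        obtain ⟨u, hu, hux⟩ := Finset.mem_image.mp hx.1
        have hue' : u ∉ e' := by
          intro hue'
          rw [hφv0 u hue'] at hux
          exact hv0A (hux ▸ hxA)
        rw [hφid u hue'] at hux
        exact ⟨u, Finset.mem_inter.mpr ⟨hu, hux ▸ hxA⟩⟩
      · obtain ⟨y, hy⟩ := hc2
        rw [Finset.mem_sdiff] at hy
        obtain ⟨u, hu, huy⟩ := Finset.mem_image.mp hy.1
        by_cases hue' : u ∈ e'
        · exact ⟨u, Finset.mem_sdiff.mpr ⟨hu, hAe' u hue'⟩⟩
        · rw [hφid u hue'] at huy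
          subst huy
          have huU' : u ∈ U' := hgU' hy.1
          have : u ∉ A := fun h => hy.2 (Finset.mem_inter.mpr ⟨h, huU'⟩)
          exact ⟨u, Finset.mem_sdiff.mpr ⟨hu, this⟩⟩
    · -- v0 ∉ U'
      have hee' : ∀ u ∈ e, u ∉ e' := by
        intro u hu hue'
        have h1 : contractMap e' v0 u ∈ e.image (contractMap e' v0) :=
          Finset.mem_image_of_mem _ hu
        rw [hφv0 u hue'] at h1
        exact hv (hfU' h1)
      rw [image_contractMap_of_disjoint hee'] at hfU'
      obtain ⟨A, hAU, hAne, hAneU, hAcard⟩ :=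
        exists_lam_min (E := E) (exists_valid_A he2 hfU')
      refine (lam_le (E := contract E e' v0) hAU hAne hAneU).trans ?_
      have hle : Multiset.card (cutEdges (induced (contract E e' v0) U') A) ≤
          Multiset.card (cutEdges (induced E U') A) := by
        rw [cut_contract_eq, Multiset.card_map, cut_eq]
        apply card_filter_mono
        rintro g ⟨⟨hcross, hgU'⟩, hge'⟩
        have hgdisj : ∀ x ∈ g, x ∉ e' := by
          intro x hx hxe'
          have : contractMap e' v0 x ∈ g.image (contractMap e' v0) :=
            Finset.mem_image_of_mem _ hx
          rw [hφv0 x hxe'] at this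
          exact hv (hgU' this)
        rw [image_contractMap_of_disjoint hgdisj] at hcross hgU'
        exact ⟨hcross, hgU'⟩
      refine hle.trans ?_
      rw [← hAcard]
      exact lam_le_strength hfU'
  · -- strength E e ≤ strength of contracted
    obtain ⟨U, heU, hUlam⟩ := exists_strength_max E e
    by_cases hUe' : (U ∩ e').Nonempty
    · -- contraction touches U
      set Ut : Finset V := U ∪ e' ∪ W with hUtdef
      have hUUt : U ⊆ Ut := fun x hx => Finset.mem_union_left _ (Finset.mem_union_left _ hx)
      have he'Ut : e' ⊆ Ut := fun x hx => Finset.mem_union_left _ (Finset.mem_union_right _ hx)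
      have hWUt : W ⊆ Ut := fun x hx => Finset.mem_union_right _ hx
      have hf₀U' : e.image (contractMap e' v0) ⊆ Ut.image (contractMap e' v0) :=
        Finset.image_subset_image (heU.trans hUUt)
      refine le_trans ?_ (lam_le_strength (E := contract E e' v0) hf₀U')
      apply le_lam (exists_valid_A hf₀2 hf₀U')
      intro A' hA'U' hA'ne hA'neU'
      set A : Finset V := Ut.filter (fun u => contractMap e' v0 u ∈ A') with hAdef
      have hAUt : A ⊆ Ut := Finset.filter_subset _ _
      have hAmem : ∀ x, x ∈ A ↔ x ∈ Ut ∧ contractMap e' v0 x ∈ A' := by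
        intro x; rw [hAdef, Finset.mem_filter]
      have hAne : A.Nonempty := by
        obtain ⟨x, hx⟩ := hA'ne
        obtain ⟨u, hu, hux⟩ := Finset.mem_image.mp (hA'U' hx)
        exact ⟨u, (hAmem u).mpr ⟨hu, hux ▸ hx⟩⟩
      have hAneUt : A ≠ Ut := by
        obtain ⟨y, hyU', hyA'⟩ :=
          Finset.exists_of_ssubset (lt_of_le_of_ne hA'U' hA'neU')
        obtain ⟨u, hu, huy⟩ := Finset.mem_image.mp hyU'
        intro h
        have : u ∈ A := by rw [h]; exact hu
        exact hyA' (huy ▸ ((hAmem u).mp this).2)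
      have he'split : e' ⊆ A ∨ ∀ x ∈ e', x ∉ A := by
        by_cases hca : ∃ u, u ∈ e' ∧ u ∈ A
        · left
          obtain ⟨u, hue', huA⟩ := hca
          have hv0A' : v0 ∈ A' := by
            have := ((hAmem u).mp huA).2
            rw [hφv0 u hue'] at this
            exact this
          intro w hw
          refine (hAmem w).mpr ⟨he'Ut hw, ?_⟩
          rw [hφv0 w hw]
          exact hv0A'
        · right
          intro x hx hxA
          exact hca ⟨x, hx, hxA⟩
      have key : Multiset.card (cutEdges (induced E Ut) A) ≤
          Multiset.card (cutEdges (induced (contract E e' v0) (Ut.image (contractMap e' v0))) A') := by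
        rw [cut_eq, cut_contract_eq, Multiset.card_map]
        apply card_filter_mono
        rintro g ⟨⟨hc1, hc2⟩, hgUt⟩
        have hgne' : ¬ g ⊆ e' := by
          intro hge'
          rcases he'split with h | h
          · obtain ⟨x, hx⟩ := hc2
            rw [Finset.mem_sdiff] at hx
            exact hx.2 (h (hge' hx.1))
          · obtain ⟨x, hx⟩ := hc1
            rw [Finset.mem_inter] at hx
            exact h x (hge' hx.1) hx.2
        refine ⟨⟨⟨?_, ?_⟩, Finset.image_subset_image hgUt⟩, hgne'⟩
        · obtain ⟨x, hx⟩ := hc1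
          rw [Finset.mem_inter] at hx
          exact ⟨contractMap e' v0 x, Finset.mem_inter.mpr
            ⟨Finset.mem_image_of_mem _ hx.1, ((hAmem x).mp hx.2).2⟩⟩
        · obtain ⟨x, hx⟩ := hc2
          rw [Finset.mem_sdiff] at hx
          refine ⟨contractMap e' v0 x, Finset.mem_sdiff.mpr
            ⟨Finset.mem_image_of_mem _ hx.1, ?_⟩⟩
          intro hφxA'
          exact hx.2 ((hAmem x).mpr ⟨hgUt hx.1, hφxA'⟩)
      refine le_trans ?_ key
      obtain ⟨w, hw⟩ := hUe'
      rw [Finset.mem_inter] at hw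
      by_cases hc1 : (A ∩ U).Nonempty
      · by_cases hc2 : (U \ A).Nonempty
        · rw [← hUlam]
          exact lam_le_cut hUUt hc1 hc2
        · -- U ⊆ A; use complement B = Ut \ A
          have hUA : U ⊆ A := by
            intro x hx
            by_contra hxA
            exact hc2 ⟨x, Finset.mem_sdiff.mpr ⟨hx, hxA⟩⟩
          have hBW : Ut \ A ⊆ W := by
            intro x hx
            rw [Finset.mem_sdiff] at hx
            have hxU : x ∉ U := fun h => hx.2 (hUA h)
            have := hx.1
            simp only [hUtdef, Finset.mem_union] at this
            rcases this with (h | h) | h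
            · exact absurd h hxU
            · exact he'W h
            · exact h
          have hBne : (Ut \ A).Nonempty := by
            rw [Finset.sdiff_nonempty]
            intro h
            exact hAneUt (Finset.Subset.antisymm hAUt h)
          have h1 : ((Ut \ A) ∩ W).Nonempty := by
            obtain ⟨x, hx⟩ := hBne
            exact ⟨x, Finset.mem_inter.mpr ⟨hx, hBW hx⟩⟩
          have h2 : (W \ (Ut \ A)).Nonempty := by
            refine ⟨w, Finset.mem_sdiff.mpr ⟨he'W hw.2, ?_⟩⟩
            rw [Finset.mem_sdiff]
            push_neg
            intro _
            exact hUA hw.1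
          have hkle : k ≤ Multiset.card (cutEdges (induced E Ut) A) := by
            have := hkW.trans (lam_le_cut hWUt h1 h2)
            rwa [cut_compl hAUt] at this
          omega
      · -- A ∩ U = ∅, so A ⊆ W
        have hAW : A ⊆ W := by
          intro x hx
          have hxU : x ∉ U := fun h => hc1 ⟨x, Finset.mem_inter.mpr ⟨hx, h⟩⟩
          have := hAUt hx
          simp only [hUtdef, Finset.mem_union] at this
          rcases this with (h | h) | h
          · exact absurd h hxU
          · exact he'W h
          · exact h
        have h1 : (A ∩ W).Nonempty := by
          obtain ⟨x, hx⟩ := hAne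
          exact ⟨x, Finset.mem_inter.mpr ⟨hx, hAW hx⟩⟩
        have h2 : (W \ A).Nonempty := by
          refine ⟨w, Finset.mem_sdiff.mpr ⟨he'W hw.2, ?_⟩⟩
          intro h
          exact hc1 ⟨w, Finset.mem_inter.mpr ⟨h, hw.1⟩⟩
        have hkle : k ≤ Multiset.card (cutEdges (induced E Ut) A) :=
          hkW.trans (lam_le_cut hWUt h1 h2)
        omega
    · -- U disjoint from e'
      have hdisjU : ∀ u ∈ U, u ∉ e' := by
        intro u hu hue'
        exact hUe' ⟨u, Finset.mem_inter.mpr ⟨hu, hue'⟩⟩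
      have hee' : ∀ u ∈ e, u ∉ e' := fun u hu => hdisjU u (heU hu)
      have hind : induced (contract E e' v0) U = induced E U := by
        simp only [induced, contract, Multiset.filter_map, Function.comp, Multiset.filter_filter]
        have h1 : Multiset.filter
            (fun g => g.image (contractMap e' v0) ⊆ U ∧ ¬ g ⊆ e') E =
            Multiset.filter (fun g => g ⊆ U) E := by
          apply Multiset.filter_congr
          intro g hg
          constructor
          · rintro ⟨himg, -⟩
            intro x hx
            have hxe' : x ∉ e' := by
              intro hxe'
              have hm : contractMap e' v0 x ∈ g.image (contractMap e' v0) :=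
                Finset.mem_image_of_mem _ hx
              rw [hφv0 x hxe'] at hm
              exact hdisjU v0 (himg hm) hv0
            have hm : contractMap e' v0 x ∈ g.image (contractMap e' v0) :=
              Finset.mem_image_of_mem _ hx
            rw [hφid x hxe'] at hm
            exact himg hm
          · intro hgU
            have hgd : ∀ x ∈ g, x ∉ e' := fun x hx => hdisjU x (hgU hx)
            refine ⟨?_, ?_⟩
            · show g.image (contractMap e' v0) ⊆ U
              rw [image_contractMap_of_disjoint hgd]; exact hgU
            · intro hge'
              have hgpos : 0 < g.card := lt_of_lt_of_le two_pos (hE g hg)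
              obtain ⟨x, hx⟩ := Finset.card_pos.mp hgpos
              exact hgd x hx (hge' hx)
        rw [h1]
        have h2 : ∀ g ∈ Multiset.filter (fun g => g ⊆ U) E,
            g.image (contractMap e' v0) = id g := by
          intro g hg
          rw [Multiset.mem_filter] at hg
          exact image_contractMap_of_disjoint (fun x hx => hdisjU x (hg.2 hx))
        rw [Multiset.map_congr rfl h2, Multiset.map_id]
      have hlameq : lam (contract E e' v0) U = lam E U := by
        unfold lam
        rw [hind]
      have hf₀e : e.image (contractMap e' v0) = e := image_contractMap_of_disjoint hee'
      calc strength E e = lam E U := hUlam.symm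
        _ = lam (contract E e' v0) U := hlameq.symm
        _ ≤ strength (contract E e' v0) (e.image (contractMap e' v0)) :=
            lam_le_strength (by rw [hf₀e]; exact heU)
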